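/- The point (0, 2π/√3) is a critical point of Ω₁: the gradient of Ω₁(k_x, k_y) = F + √S vanishes there, and the second-order Taylor expansion is Ω₁ - 6 ∼ -0.375 q_x² - 1.125 q_y² + O(|q|³), where (q_x, q_y) = (k_x, k_y) - (0, 2π/√3). In particular this critical point is a local maximum of Ω₁. -/

import Mathlib

open Real

/-- F(k_x,k_y): mean of the two eigenvalues of the lattice dynamical matrix. -/
noncomputable def Fk (kx ky : ℝ) : ℝ :=
  1 - Real.cos kx + 2 * (1 - Real.cos (kx / 2) * Real.cos (Real.sqrt 3 * ky / 2))

/-- S(k_x,k_y): discriminant-type quantity in the dispersion relation. -/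
noncomputable def Sk (kx ky : ℝ) : ℝ :=
  (Real.cos kx - Real.cos (kx / 2) * Real.cos (Real.sqrt 3 * ky / 2)) ^ 2
    + 3 * (Real.sin (kx / 2)) ^ 2 * (Real.sin (Real.sqrt 3 * ky / 2)) ^ 2

/-- Upper dispersion branch Ω₁ = F + √S. -/
noncomputable def Om1 (kx ky : ℝ) : ℝ := Fk kx ky + Real.sqrt (Sk kx ky)

/-- Lower dispersion branch Ω₂ = F - √S. -/
noncomputable def Om2 (kx ky : ℝ) : ℝ := Fk kx ky - Real.sqrt (Sk kx ky)

/-- B_xx entry of the Fourier symbol. -/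
noncomputable def Bxx (Ω kx ky : ℝ) : ℝ :=
  -Ω + 3 * (1 - Real.cos (kx / 2) * Real.cos (Real.sqrt 3 * ky / 2))

/-- B_yy entry of the Fourier symbol. -/
noncomputable def Byy (Ω kx ky : ℝ) : ℝ :=
  -Ω + 2 * (1 - Real.cos kx) + 1 - Real.cos (kx / 2) * Real.cos (Real.sqrt 3 * ky / 2)

/-- B_xy = B_yx entry of the Fourier symbol. -/
noncomputable def Bxy (kx ky : ℝ) : ℝ :=
  -Real.sqrt 3 * Real.sin (kx / 2) * Real.sin (Real.sqrt 3 * ky / 2)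

open Asymptotics Filter

private lemma sqrt_taylor {p : ℝ} (hp : 0 ≤ 4 + p) :
    |Real.sqrt (4 + p) - 2 - p / 4| ≤ p ^ 2 / 16 := by
  set t := Real.sqrt (4 + p) with ht
  have h0 : 0 ≤ t := Real.sqrt_nonneg _
  have h2 : t ^ 2 = 4 + p := Real.sq_sqrt hp
  have heq : t - 2 - p / 4 = -((t - 2) ^ 2 / 4) := by linear_combination h2 / 4
  rw [heq, abs_neg, abs_of_nonneg (by positivity)]
  have h4 : 0 ≤ (t - 2) ^ 2 * (t ^ 2 + 4 * t) :=
    mul_nonneg (sq_nonneg _) (by nlinarith)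
  nlinarith [h4]

private lemma sqb {a b : ℝ} (h : |a| ≤ b) : a ^ 2 ≤ b ^ 2 := by
  nlinarith [abs_nonneg a, sq_abs a, mul_le_mul h h (abs_nonneg a) ((abs_nonneg a).trans h)]


set_option maxHeartbeats 2000000 in
private lemma core (x y r c C s S E om : ℝ)
    (hr : r ≤ 1) (hx : |x| ≤ r) (hy : |y| ≤ r)
    (hc1 : |c - 1 + x ^ 2 / 8| ≤ x ^ 4)
    (hC1 : |C - 1 + 3 * y ^ 2 / 8| ≤ y ^ 4)
    (hs2 : s ^ 2 ≤ x ^ 2 / 4) (hS2 : S ^ 2 ≤ 3 * y ^ 2 / 4)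
    (hE : |E| ≤ (4 * (c * C - 1 - 2 * s ^ 2) + (c * C - 1 - 2 * s ^ 2) ^ 2
        + 3 * s ^ 2 * S ^ 2) ^ 2 / 16)
    (hom : om = 2 * s ^ 2 + 2 + 2 * (c * C) + (2 + (4 * (c * C - 1 - 2 * s ^ 2)
        + (c * C - 1 - 2 * s ^ 2) ^ 2 + 3 * s ^ 2 * S ^ 2) / 4 + E)) :
    |om - 6 - (-(0.375 : ℝ) * x ^ 2 - 1.125 * y ^ 2)| ≤ 1000 * r ^ 3 := by
  subst hom
  set B := c * C - 1 - 2 * s ^ 2 with hBdef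
  set P := 4 * B + B ^ 2 + 3 * s ^ 2 * S ^ 2 with hPdef
  clear_value B P
  have hr0 : 0 ≤ r := (abs_nonneg x).trans hx
  have hx2 : x ^ 2 ≤ r ^ 2 := sqb hx
  have hy2 : y ^ 2 ≤ r ^ 2 := sqb hy
  have hx4 : x ^ 4 ≤ r ^ 4 := by nlinarith [hx2, sq_nonneg x]
  have hy4 : y ^ 4 ≤ r ^ 4 := by nlinarith [hy2, sq_nonneg y]
  have hrr : r ^ 2 ≤ r := by nlinarith
  have hr42 : r ^ 4 ≤ r ^ 2 := by nlinarith [mul_le_mul hrr hrr (sq_nonneg r) hr0]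
  have hr43 : r ^ 4 ≤ r ^ 3 := by nlinarith [mul_le_mul_of_nonneg_right hrr (sq_nonneg r)]
  obtain ⟨hc1a, hc1b⟩ := abs_le.mp hc1
  obtain ⟨hC1a, hC1b⟩ := abs_le.mp hC1
  have hu : |c - 1| ≤ 2 * r ^ 2 := by
    rw [abs_le]; constructor <;> linarith [hc1a, hc1b, hx2, hx4, hr42, sq_nonneg x]
  have hv : |C - 1| ≤ 2 * r ^ 2 := by
    rw [abs_le]; constructor <;> linarith [hC1a, hC1b, hy2, hy4, hr42, sq_nonneg y]
  have huv : |(c - 1) * (C - 1)| ≤ 4 * r ^ 4 := by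
    rw [abs_mul]
    calc |c - 1| * |C - 1| ≤ (2 * r ^ 2) * (2 * r ^ 2) :=
          mul_le_mul hu hv (abs_nonneg _) (by positivity)
    _ = 4 * r ^ 4 := by ring
  have hA3 : |3 * (c * C - 1) + 3 * x ^ 2 / 8 + 9 * y ^ 2 / 8| ≤ 18 * r ^ 4 := by
    have heq : 3 * (c * C - 1) + 3 * x ^ 2 / 8 + 9 * y ^ 2 / 8
        = 3 * ((c - 1) * (C - 1)) + 3 * (c - 1 + x ^ 2 / 8) + 3 * (C - 1 + 3 * y ^ 2 / 8) := by
      ring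
    rw [heq]
    have t1 := abs_add_le (3 * ((c - 1) * (C - 1)) + 3 * (c - 1 + x ^ 2 / 8))
      (3 * (C - 1 + 3 * y ^ 2 / 8))
    have t2 := abs_add_le (3 * ((c - 1) * (C - 1))) (3 * (c - 1 + x ^ 2 / 8))
    have t3 : |3 * ((c - 1) * (C - 1))| = 3 * |(c - 1) * (C - 1)| := by
      rw [abs_mul]; norm_num
    have t4 : |3 * (c - 1 + x ^ 2 / 8)| = 3 * |c - 1 + x ^ 2 / 8| := by
      rw [abs_mul]; norm_num
    have t5 : |3 * (C - 1 + 3 * y ^ 2 / 8)| = 3 * |C - 1 + 3 * y ^ 2 / 8| := by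
      rw [abs_mul]; norm_num
    linarith [huv, hc1, hC1, hx4, hy4]
  have hA : |c * C - 1| ≤ 8 * r ^ 2 := by
    have heq : c * C - 1 = (c - 1) * (C - 1) + (c - 1) + (C - 1) := by ring
    rw [heq]
    have t1 := abs_add_le ((c - 1) * (C - 1) + (c - 1)) (C - 1)
    have t2 := abs_add_le ((c - 1) * (C - 1)) (c - 1)
    linarith [huv, hu, hv, hr42]
  have hB : |B| ≤ 9 * r ^ 2 := by
    have heq : B = (c * C - 1) + (-(2 * s ^ 2)) := by rw [hBdef]; ring
    rw [heq]
    have t1 := abs_add_le (c * C - 1) (-(2 * s ^ 2))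
    have t2 : |(-(2 * s ^ 2))| = 2 * s ^ 2 := by
      rw [abs_neg, abs_of_nonneg (by positivity)]
    linarith [hA, hs2, hx2]
  have hB2 : B ^ 2 ≤ 81 * r ^ 4 := by
    calc B ^ 2 ≤ (9 * r ^ 2) ^ 2 := sqb hB
    _ = 81 * r ^ 4 := by ring
  have hsS : s ^ 2 * S ^ 2 ≤ (3 / 16) * r ^ 4 := by
    nlinarith [mul_le_mul hs2 hS2 (sq_nonneg S) (by positivity : (0:ℝ) ≤ x ^ 2 / 4),
      mul_le_mul hx2 hy2 (sq_nonneg y) (sq_nonneg r)]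
  have hsSnn : 0 ≤ s ^ 2 * S ^ 2 := by positivity
  have hP : |P| ≤ 118 * r ^ 2 := by
    rw [hPdef]
    have t1 := abs_add_le (4 * B + B ^ 2) (3 * s ^ 2 * S ^ 2)
    have t2 := abs_add_le (4 * B) (B ^ 2)
    have t3 : |4 * B| = 4 * |B| := by rw [abs_mul]; norm_num
    have t4 : |B ^ 2| = B ^ 2 := abs_of_nonneg (sq_nonneg _)
    have t5 : |3 * s ^ 2 * S ^ 2| = 3 * (s ^ 2 * S ^ 2) := by
      rw [abs_of_nonneg (by positivity)]; ring
    linarith [hB, hB2, hsS, hr42]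
  have hE' : |E| ≤ 871 * r ^ 4 := by
    have hPsq : P ^ 2 ≤ 13924 * r ^ 4 := by
      calc P ^ 2 ≤ (118 * r ^ 2) ^ 2 := sqb hP
      _ = 13924 * r ^ 4 := by ring
    linarith [hE, hPsq]
  have heqT : 2 * s ^ 2 + 2 + 2 * (c * C) + (2 + P / 4 + E) - 6
        - (-(0.375 : ℝ) * x ^ 2 - 1.125 * y ^ 2)
      = (3 * (c * C - 1) + 3 * x ^ 2 / 8 + 9 * y ^ 2 / 8)
        + B ^ 2 / 4 + (3 / 4) * (s ^ 2 * S ^ 2) + E := by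
    rw [hPdef, hBdef]; norm_num; ring
  rw [heqT]
  have u1 := abs_add_le ((3 * (c * C - 1) + 3 * x ^ 2 / 8 + 9 * y ^ 2 / 8)
    + B ^ 2 / 4 + (3 / 4) * (s ^ 2 * S ^ 2)) E
  have u2 := abs_add_le ((3 * (c * C - 1) + 3 * x ^ 2 / 8 + 9 * y ^ 2 / 8)
    + B ^ 2 / 4) ((3 / 4) * (s ^ 2 * S ^ 2))
  have u3 := abs_add_le (3 * (c * C - 1) + 3 * x ^ 2 / 8 + 9 * y ^ 2 / 8) (B ^ 2 / 4)
  have u4 : |B ^ 2 / 4| = B ^ 2 / 4 := abs_of_nonneg (by positivity)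
  have u5 : |(3 / 4) * (s ^ 2 * S ^ 2)| = (3 / 4) * (s ^ 2 * S ^ 2) := by
    rw [abs_of_nonneg (by positivity)]
  linarith [hA3, hB2, hsS, hE', hr43]

set_option maxHeartbeats 1000000 in
private lemma key (x y r : ℝ) (hx : |x| ≤ r) (hy : |y| ≤ r) (hr : r ≤ 1) :
    |Om1 x (2 * Real.pi / Real.sqrt 3 + y) - 6
      - (-(0.375 : ℝ) * x ^ 2 - 1.125 * y ^ 2)| ≤ 1000 * r ^ 3 := by
  have h3 : (0:ℝ) < Real.sqrt 3 := Real.sqrt_pos.mpr (by norm_num)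
  have hsq3 : Real.sqrt 3 ^ 2 = 3 := Real.sq_sqrt (by norm_num)
  have h32 : Real.sqrt 3 ≤ 2 := by nlinarith [hsq3, h3]
  have hky : Real.sqrt 3 * (2 * Real.pi / Real.sqrt 3 + y) / 2
      = Real.pi + Real.sqrt 3 * y / 2 := by
    field_simp
  have hcos2 : Real.cos (Real.sqrt 3 * (2 * Real.pi / Real.sqrt 3 + y) / 2)
      = -Real.cos (Real.sqrt 3 * y / 2) := by
    rw [hky]; simp [Real.cos_add]
  have hsin2 : Real.sin (Real.sqrt 3 * (2 * Real.pi / Real.sqrt 3 + y) / 2)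
      = -Real.sin (Real.sqrt 3 * y / 2) := by
    rw [hky]; simp [Real.sin_add]
  have hcx : Real.cos x = 1 - 2 * Real.sin (x / 2) ^ 2 := by
    have h1 := Real.sin_sq_add_cos_sq (x / 2)
    have h2 := Real.cos_two_mul (x / 2)
    have hx2 : x = 2 * (x / 2) := by ring
    calc Real.cos x = Real.cos (2 * (x / 2)) := by rw [← hx2]
    _ = 2 * Real.cos (x / 2) ^ 2 - 1 := h2
    _ = 1 - 2 * Real.sin (x / 2) ^ 2 := by linarith
  set c := Real.cos (x / 2) with hc
  set s := Real.sin (x / 2) with hs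
  set C := Real.cos (Real.sqrt 3 * y / 2) with hC
  set S := Real.sin (Real.sqrt 3 * y / 2) with hS
  have hr0 : 0 ≤ r := (abs_nonneg x).trans hx
  have hSkeq : Sk x (2 * Real.pi / Real.sqrt 3 + y)
      = 4 + (4 * (c * C - 1 - 2 * s ^ 2) + (c * C - 1 - 2 * s ^ 2) ^ 2
        + 3 * s ^ 2 * S ^ 2) := by
    unfold Sk
    rw [hcos2, hsin2, hcx]
    ring
  have hSnn : 0 ≤ 4 + (4 * (c * C - 1 - 2 * s ^ 2) + (c * C - 1 - 2 * s ^ 2) ^ 2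
      + 3 * s ^ 2 * S ^ 2) := by
    rw [← hSkeq]; unfold Sk; positivity
  have hFkeq : Fk x (2 * Real.pi / Real.sqrt 3 + y) = 2 * s ^ 2 + 2 + 2 * (c * C) := by
    unfold Fk
    rw [hcos2, hcx]
    ring
  have hOmeq : Om1 x (2 * Real.pi / Real.sqrt 3 + y)
      = 2 * s ^ 2 + 2 + 2 * (c * C)
        + (2 + (4 * (c * C - 1 - 2 * s ^ 2) + (c * C - 1 - 2 * s ^ 2) ^ 2
          + 3 * s ^ 2 * S ^ 2) / 4
          + (Real.sqrt (4 + (4 * (c * C - 1 - 2 * s ^ 2) + (c * C - 1 - 2 * s ^ 2) ^ 2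
            + 3 * s ^ 2 * S ^ 2)) - 2 - (4 * (c * C - 1 - 2 * s ^ 2)
            + (c * C - 1 - 2 * s ^ 2) ^ 2 + 3 * s ^ 2 * S ^ 2) / 4)) := by
    unfold Om1
    rw [hFkeq, hSkeq]
    ring
  -- hypotheses for core
  have hx12 : |x / 2| ≤ 1 := by
    rw [abs_div, abs_two]
    linarith [hx, hr]
  have hcb := Real.cos_bound hx12
  have hc1 : |c - 1 + x ^ 2 / 8| ≤ x ^ 4 := by
    have e1 : Real.cos (x / 2) - (1 - (x / 2) ^ 2 / 2) = c - 1 + x ^ 2 / 8 := by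
      rw [← hc]; ring
    have e2 : |x / 2| ^ 4 = x ^ 4 / 16 := by
      rw [← abs_pow, abs_of_nonneg (by positivity : (0:ℝ) ≤ (x / 2) ^ 4)]; ring
    rw [← e1]
    calc |Real.cos (x / 2) - (1 - (x / 2) ^ 2 / 2)| ≤ |x / 2| ^ 4 * (5 / 96) := hcb
    _ = x ^ 4 / 16 * (5 / 96) := by rw [e2]
    _ ≤ x ^ 4 := by nlinarith [sq_nonneg (x ^ 2)]
  have hy12 : |Real.sqrt 3 * y / 2| ≤ 1 := by
    rw [abs_div, abs_two, abs_mul, abs_of_nonneg h3.le]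
    nlinarith [hy, hr, abs_nonneg y, h32, h3]
  have hCb := Real.cos_bound hy12
  have hC1 : |C - 1 + 3 * y ^ 2 / 8| ≤ y ^ 4 := by
    have e1 : Real.cos (Real.sqrt 3 * y / 2) - (1 - (Real.sqrt 3 * y / 2) ^ 2 / 2)
        = C - 1 + 3 * y ^ 2 / 8 := by
      rw [← hC]
      have : (Real.sqrt 3 * y / 2) ^ 2 = 3 * y ^ 2 / 4 := by
        rw [div_pow, mul_pow, hsq3]; ring
      rw [this]
      ring
    have e2 : |Real.sqrt 3 * y / 2| ^ 4 = 9 * y ^ 4 / 16 := by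
      rw [← abs_pow, abs_of_nonneg (by positivity : (0:ℝ) ≤ (Real.sqrt 3 * y / 2) ^ 4)]
      rw [div_pow, mul_pow, show ((4:ℕ) = 2 * 2) from rfl, pow_mul, hsq3]
      ring
    rw [← e1]
    calc |Real.cos (Real.sqrt 3 * y / 2) - (1 - (Real.sqrt 3 * y / 2) ^ 2 / 2)|
        ≤ |Real.sqrt 3 * y / 2| ^ 4 * (5 / 96) := hCb
    _ = 9 * y ^ 4 / 16 * (5 / 96) := by rw [e2]
    _ ≤ y ^ 4 := by nlinarith [sq_nonneg (y ^ 2)]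
  have hs2 : s ^ 2 ≤ x ^ 2 / 4 := by
    have := Real.sin_sq_le_sq (x := x / 2)
    rw [← hs] at this
    nlinarith [this]
  have hS2 : S ^ 2 ≤ 3 * y ^ 2 / 4 := by
    have := Real.sin_sq_le_sq (x := Real.sqrt 3 * y / 2)
    rw [← hS] at this
    nlinarith [this, hsq3]
  have hEb := sqrt_taylor hSnn
  exact core x y r c C s S _ _ hr hx hy hc1 hC1 hs2 hS2 hEb hOmeq

private lemma om1_at : Om1 0 (2 * Real.pi / Real.sqrt 3) = 6 := by
  have h0 := key 0 0 0 (by norm_num) (by norm_num) (by norm_num)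
  simp only [add_zero] at h0
  norm_num at h0
  linarith [h0]



set_option maxHeartbeats 1000000 in
/-- (0, 2π/√3) is a critical point of Ω₁ (vanishing gradient),
with Taylor expansion Ω₁ - 6 = -0.375 q_x² - 1.125 q_y² + O(|q|³); it is a
local maximum of Ω₁. -/
theorem Om1_critical_point_expansion :
    fderiv ℝ (fun p : ℝ × ℝ => Om1 p.1 p.2) (0, 2 * Real.pi / Real.sqrt 3) = 0 ∧
    ((fun q : ℝ × ℝ =>
        Om1 q.1 (2 * Real.pi / Real.sqrt 3 + q.2) - 6
          - (-(0.375 : ℝ) * q.1 ^ 2 - 1.125 * q.2 ^ 2))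
      =O[nhds (0 : ℝ × ℝ)] fun q => ‖q‖ ^ 3) ∧
    IsLocalMax (fun p : ℝ × ℝ => Om1 p.1 p.2) (0, 2 * Real.pi / Real.sqrt 3) := by
  refine ⟨?_, ?_, ?_⟩
  · -- fderiv = 0
    have hder : HasFDerivAt (fun p : ℝ × ℝ => Om1 p.1 p.2)
        (0 : ℝ × ℝ →L[ℝ] ℝ) (0, 2 * Real.pi / Real.sqrt 3) := by
      rw [hasFDerivAt_iff_isLittleO_nhds_zero]
      rw [Asymptotics.isLittleO_iff]
      intro ε hε
      have hδ : (0:ℝ) < min 1 (ε / 1002) := by positivity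
      filter_upwards [Metric.ball_mem_nhds (0 : ℝ × ℝ) hδ] with q hq
      rw [Metric.mem_ball, dist_zero_right] at hq
      have hq1 : ‖q‖ < 1 := lt_of_lt_of_le hq (min_le_left _ _)
      have hq2 : ‖q‖ < ε / 1002 := lt_of_lt_of_le hq (min_le_right _ _)
      have hqx : |q.1| ≤ ‖q‖ := by rw [← Real.norm_eq_abs]; exact norm_fst_le q
      have hqy : |q.2| ≤ ‖q‖ := by rw [← Real.norm_eq_abs]; exact norm_snd_le q
      have hk := key q.1 q.2 ‖q‖ hqx hqy hq1.le
      have hval1 : (((0:ℝ), 2 * Real.pi / Real.sqrt 3) + q).1 = q.1 := by simp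
      have hval2 : (((0:ℝ), 2 * Real.pi / Real.sqrt 3) + q).2
          = 2 * Real.pi / Real.sqrt 3 + q.2 := by simp
      simp only [ContinuousLinearMap.zero_apply, sub_zero, hval1, hval2, om1_at,
        Real.norm_eq_abs]
      obtain ⟨hk1, hk2⟩ := abs_le.mp hk
      have hn0 : (0:ℝ) ≤ ‖q‖ := norm_nonneg q
      have ha2 : q.1 ^ 2 ≤ ‖q‖ ^ 2 := by
        nlinarith [mul_le_mul hqx hqx (abs_nonneg q.1) hn0, sq_abs q.1]
      have hb2 : q.2 ^ 2 ≤ ‖q‖ ^ 2 := by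
        nlinarith [mul_le_mul hqy hqy (abs_nonneg q.2) hn0, sq_abs q.2]
      have k1 : 1000 * ‖q‖ ^ 3 ≤ 1000 * ‖q‖ ^ 2 := by nlinarith [sq_nonneg ‖q‖]
      have k2 : ‖q‖ ^ 2 ≤ (ε / 1002) * ‖q‖ := by
        nlinarith [mul_le_mul_of_nonneg_right hq2.le hn0]
      have hεn : 0 ≤ ε * ‖q‖ := mul_nonneg hε.le hn0
      rw [abs_le]
      constructor <;>
        linarith [hk1, hk2, ha2, hb2, k1, k2, hεn, sq_nonneg q.1, sq_nonneg q.2,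
          pow_nonneg hn0 3]
    rw [hder.fderiv]
  · -- isBigO
    rw [Asymptotics.isBigO_iff]
    refine ⟨1000, ?_⟩
    filter_upwards [Metric.ball_mem_nhds (0 : ℝ × ℝ) one_pos] with q hq
    rw [Metric.mem_ball, dist_zero_right] at hq
    have hqx : |q.1| ≤ ‖q‖ := by rw [← Real.norm_eq_abs]; exact norm_fst_le q
    have hqy : |q.2| ≤ ‖q‖ := by rw [← Real.norm_eq_abs]; exact norm_snd_le q
    have hk := key q.1 q.2 ‖q‖ hqx hqy hq.le
    have h1 : ‖(‖q‖ ^ 3 : ℝ)‖ = ‖q‖ ^ 3 := by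
      rw [Real.norm_eq_abs, abs_of_nonneg (by positivity)]
    rw [Real.norm_eq_abs, h1]
    exact hk
  · -- local max
    have hδ : (0:ℝ) < min 1 (3 / 8000) := by norm_num
    filter_upwards [Metric.ball_mem_nhds ((0:ℝ), 2 * Real.pi / Real.sqrt 3) hδ] with p hp
    rw [Metric.mem_ball] at hp
    set r := dist p ((0:ℝ), 2 * Real.pi / Real.sqrt 3) with hrdef
    have hr1 : r < 1 := lt_of_lt_of_le hp (min_le_left _ _)
    have hr2 : r < 3 / 8000 := lt_of_lt_of_le hp (min_le_right _ _)
    have hr0 : 0 ≤ r := dist_nonneg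
    have hrsplit : r = max |p.1| |p.2 - 2 * Real.pi / Real.sqrt 3| := by
      rw [hrdef, Prod.dist_eq, Real.dist_eq, Real.dist_eq, sub_zero]
    have hx : |p.1| ≤ r := by rw [hrsplit]; exact le_max_left _ _
    have hy : |p.2 - 2 * Real.pi / Real.sqrt 3| ≤ r := by
      rw [hrsplit]; exact le_max_right _ _
    have hk := key p.1 (p.2 - 2 * Real.pi / Real.sqrt 3) r hx hy hr1.le
    have hp2 : 2 * Real.pi / Real.sqrt 3 + (p.2 - 2 * Real.pi / Real.sqrt 3) = p.2 := by
      ring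
    rw [hp2] at hk
    have hxy2 : r ^ 2 ≤ p.1 ^ 2 + (p.2 - 2 * Real.pi / Real.sqrt 3) ^ 2 := by
      rcases le_total |p.1| |p.2 - 2 * Real.pi / Real.sqrt 3| with h | h
      · rw [hrsplit, max_eq_right h]
        nlinarith [sq_abs (p.2 - 2 * Real.pi / Real.sqrt 3), sq_nonneg p.1]
      · rw [hrsplit, max_eq_left h]
        nlinarith [sq_abs p.1, sq_nonneg (p.2 - 2 * Real.pi / Real.sqrt 3)]
    show Om1 p.1 p.2 ≤ Om1 0 (2 * Real.pi / Real.sqrt 3)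
    rw [om1_at]
    obtain ⟨hk1, hk2⟩ := abs_le.mp hk
    linarith [hk2, hxy2,
      mul_le_mul_of_nonneg_left hr2.le (mul_nonneg hr0 hr0),
      sq_nonneg (p.2 - 2 * Real.pi / Real.sqrt 3)]
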